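/- Let n ≥ 3 be an odd integer, let q = e^{2πi/n}, let p = e^{(n+1)πi/n} (so p² = q), and let i, j be nonnegative integers at most n−1 such that i² − j² is coprime to n. Let A = ℂ⟨u,v⟩/(p^{i²−j²}·u·v − v·u). Let φ_x, φ_y : A → A be the ℂ-algebra endomorphisms determined by φ_x(u) = q^i·u, φ_x(v) = q^j·v and φ_y(u) = q^j·u, φ_y(v) = q^i·v (these are well defined since they rescale the defining relation). Let ζ : A → A be any ℂ-linear map satisfying ζ(u^a·v^b) = q^{(a + C(a,2) + C(b,2))·i·j + a·b·j²} · p^{a·b·(i²−j²)} · u^b·v^a for all nonnegative integers a, b. Then the set { f ∈ A : φ_x(f) = f, φ_y(f) = f, ζ(f) = f } equals the ℂ-subalgebra of A generated by u^n + v^n and u^n·v^n. -/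

import Mathlib

/-! Theorem 2.10 of Ferraro–Kirkman–Moore–Won: the fixed ring of the inner-faithful
action of Pansera's Hopf algebra `H_{2n²}` on `A⁻ = ℂ⟨u,v⟩/(p^{i²-j²} uv - vu)`,
for `n` odd, is `ℂ[uⁿ + vⁿ, uⁿvⁿ]`. -/

noncomputable section

open FreeAlgebra

/-- The relation `v u = P • (u v)` on `ℂ⟨u,v⟩`, i.e. the quotient by the two-sided
ideal generated by `P·uv - vu`. -/
inductive Stmt11.Rel (P : ℂ) : FreeAlgebra ℂ (Fin 2) → FreeAlgebra ℂ (Fin 2) → Prop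
  | main : Stmt11.Rel P (ι ℂ 1 * ι ℂ 0) (P • (ι ℂ 0 * ι ℂ 1))

/-- `A⁻ = ℂ⟨u,v⟩/(P·uv - vu)`. -/
abbrev Stmt11.A (P : ℂ) := RingQuot (Stmt11.Rel P)

def Stmt11.u (P : ℂ) : Stmt11.A P := RingQuot.mkAlgHom ℂ (Stmt11.Rel P) (ι ℂ 0)
def Stmt11.v (P : ℂ) : Stmt11.A P := RingQuot.mkAlgHom ℂ (Stmt11.Rel P) (ι ℂ 1)

namespace Stmt11
variable (P : ℂ)

lemma vu : v P * u P = P • (u P * v P) := by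
  have := RingQuot.mkAlgHom_rel ℂ (Rel.main (P := P))
  simpa [u, v, map_mul, map_smul] using this

lemma v_pow_mul_u (b : ℕ) : v P ^ b * u P = P ^ b • (u P * v P ^ b) := by
  induction b with
  | zero => simp
  | succ b ih =>
    rw [pow_succ, mul_assoc, vu, mul_smul_comm, ← mul_assoc, ih,
      smul_mul_assoc, smul_smul, pow_succ, mul_assoc]
    ring_nf

lemma v_pow_mul_u_pow (b c : ℕ) :
    v P ^ b * u P ^ c = P ^ (b * c) • (u P ^ c * v P ^ b) := by
  induction c with
  | zero => simp
  | succ c ih =>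
    rw [pow_succ, ← mul_assoc, ih, smul_mul_assoc, mul_assoc, v_pow_mul_u,
      mul_smul_comm, smul_smul, ← pow_add]
    ring_nf
    rw [← mul_assoc]

lemma monom_mul (a b c d : ℕ) :
    (u P ^ a * v P ^ b) * (u P ^ c * v P ^ d) =
      P ^ (b * c) • (u P ^ (a + c) * v P ^ (b + d)) := by
  rw [mul_assoc, ← mul_assoc (v P ^ b), v_pow_mul_u_pow, smul_mul_assoc,
    mul_smul_comm, pow_add, pow_add]
  rw [mul_assoc, mul_assoc]

noncomputable section
variable (P : ℂ)

abbrev W := (ℕ × ℕ) →₀ ℂ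

def Uop : Module.End ℂ W := Finsupp.lmapDomain ℂ ℂ (fun ab => (ab.1 + 1, ab.2))

def Vop : Module.End ℂ W :=
  Finsupp.lsum ℂ (fun ab => LinearMap.toSpanSingleton ℂ W
    (Finsupp.single (ab.1, ab.2 + 1) (P ^ ab.1)))

@[simp] lemma Uop_single (ab : ℕ × ℕ) (c : ℂ) :
    Uop (Finsupp.single ab c) = Finsupp.single (ab.1 + 1, ab.2) c := by
  simp [Uop]

@[simp] lemma Vop_single (ab : ℕ × ℕ) (c : ℂ) :
    Vop P (Finsupp.single ab c) = Finsupp.single (ab.1, ab.2 + 1) (P ^ ab.1 * c) := by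
  simp [Vop, LinearMap.toSpanSingleton, Finsupp.smul_single, mul_comm]

def rep : A P →ₐ[ℂ] Module.End ℂ W := by
  refine RingQuot.liftAlgHom ℂ ⟨FreeAlgebra.lift ℂ (fun idx => if idx = 0 then Uop else Vop P), ?_⟩
  rintro x y ⟨⟩
  simp only [map_mul, map_smul, FreeAlgebra.lift_ι_apply]
  norm_num
  ext ab c
  simp [Module.End.mul_apply, mul_comm, pow_succ, mul_assoc, mul_left_comm]

lemma rep_u : rep P (u P) = Uop := by
  simp [rep, u, RingQuot.liftAlgHom_mkAlgHom_apply]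

lemma rep_v : rep P (v P) = Vop P := by
  simp [rep, v, RingQuot.liftAlgHom_mkAlgHom_apply]

def ev : A P →ₗ[ℂ] W where
  toFun f := rep P f (Finsupp.single (0, 0) 1)
  map_add' x y := by simp
  map_smul' c x := by simp

lemma Uop_pow (a : ℕ) (x y : ℕ) (c : ℂ) :
    (Uop ^ a) (Finsupp.single (x, y) c) = Finsupp.single (x + a, y) c := by
  induction a with
  | zero => simp
  | succ a ih =>
    rw [pow_succ', Module.End.mul_apply, ih]
    have := Uop_single (x + a, y) c
    simp only [this]
    norm_num [add_assoc]

lemma Vop_pow (b : ℕ) (k : ℕ) (c : ℂ) :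
    (Vop P ^ b) (Finsupp.single (0, k) c) = Finsupp.single (0, k + b) c := by
  induction b with
  | zero => simp
  | succ b ih =>
    rw [pow_succ', Module.End.mul_apply, ih, Vop_single]
    norm_num [add_assoc]

lemma ev_monom (a b : ℕ) : ev P (u P ^ a * v P ^ b) = Finsupp.single (a, b) 1 := by
  have : ev P (u P ^ a * v P ^ b)
      = ((rep P (u P)) ^ a) (((rep P (v P)) ^ b) (Finsupp.single (0, 0) 1)) := by
    simp [ev, map_mul, map_pow, Module.End.mul_apply]
  rw [this, rep_u, rep_v, Vop_pow, Uop_pow]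
  norm_num

lemma span_monom : Submodule.span ℂ (Set.range fun ab : ℕ × ℕ => u P ^ ab.1 * v P ^ ab.2) = ⊤ := by
  set S := Submodule.span ℂ (Set.range fun ab : ℕ × ℕ => u P ^ ab.1 * v P ^ ab.2) with hS
  have hmem : ∀ a b : ℕ, u P ^ a * v P ^ b ∈ S :=
    fun a b => Submodule.subset_span ⟨(a, b), rfl⟩
  have hmul : ∀ x ∈ S, ∀ y ∈ S, x * y ∈ S := by
    intro x hx y hy
    induction hx, hy using Submodule.span_induction₂ with
    | mem_mem x y hx hy =>
      obtain ⟨⟨a, b⟩, rfl⟩ := hx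
      obtain ⟨⟨c, d⟩, rfl⟩ := hy
      rw [monom_mul]
      exact Submodule.smul_mem _ _ (hmem _ _)
    | zero_left y hy => simpa using S.zero_mem
    | zero_right x hx => simpa using S.zero_mem
    | add_left x y z hx hy hz h1 h2 => rw [add_mul]; exact S.add_mem h1 h2
    | add_right x y z hx hy hz h1 h2 => rw [mul_add]; exact S.add_mem h1 h2
    | smul_left r x y hx hy h => rw [smul_mul_assoc]; exact S.smul_mem _ h
    | smul_right r x y hx hy h => rw [mul_smul_comm]; exact S.smul_mem _ h
  rw [eq_top_iff]
  rintro f -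
  obtain ⟨x, rfl⟩ := RingQuot.mkAlgHom_surjective ℂ (Rel P) f
  induction x using FreeAlgebra.induction with
  | grade0 r =>
    rw [AlgHom.commutes]
    have : (algebraMap ℂ (A P)) r = r • (u P ^ 0 * v P ^ 0) := by
      simp [Algebra.algebraMap_eq_smul_one]
    rw [this]
    exact S.smul_mem _ (hmem 0 0)
  | grade1 x =>
    fin_cases x
    · simpa [u] using hmem 1 0
    · simpa [u, v] using hmem 0 1
  | mul a b ha hb => rw [map_mul]; exact hmul _ ha _ hb
  | add a b ha hb => rw [map_add]; exact S.add_mem ha hb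

end

lemma exists_repr (f : A P) :
    ∃ c : W, (c.sum fun ab z => z • (u P ^ ab.1 * v P ^ ab.2)) = f := by
  have := span_monom P
  rw [← Finsupp.mem_span_range_iff_exists_finsupp (v := fun ab : ℕ × ℕ => u P ^ ab.1 * v P ^ ab.2)]
  rw [this]; trivial

lemma ev_repr (c : W) :
    ev P (c.sum fun ab z => z • (u P ^ ab.1 * v P ^ ab.2)) = c := by
  rw [map_finsuppSum]
  have : ∀ ab : ℕ × ℕ, ∀ z : ℂ, ev P (z • (u P ^ ab.1 * v P ^ ab.2)) = Finsupp.single ab z := by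
    intro ab z
    rw [map_smul, ev_monom, Finsupp.smul_single, smul_eq_mul, mul_one]
  simp only [this]
  exact Finsupp.sum_single c

section Mods
variable (n : ℕ)

/-- `xm k l = u^{kn} v^{ln}`. -/
def xm (k l : ℕ) : A P := u P ^ (k * n) * v P ^ (l * n)

lemma xm_mul (hPn : P ^ (n * n) = 1) (k l c d : ℕ) :
    xm P n k l * xm P n c d = xm P n (k + c) (l + d) := by
  unfold xm
  rw [monom_mul]
  have : P ^ (l * n * (c * n)) = 1 := by
    rw [show l * n * (c * n) = n * n * (l * c) by ring, pow_mul, hPn, one_pow]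
  rw [this, one_smul, add_mul, add_mul]

lemma g2_pow (hPn : P ^ (n * n) = 1) (k : ℕ) :
    (u P ^ n * v P ^ n) ^ k = xm P n k k := by
  induction k with
  | zero => simp [xm]
  | succ k ih =>
    rw [pow_succ, ih]
    have h1 : u P ^ n * v P ^ n = xm P n 1 1 := by simp [xm]
    rw [h1, xm_mul P n hPn]


def Mm : Submodule ℂ (A P) :=
  Submodule.span ℂ (Set.range fun kl : ℕ × ℕ => xm P n kl.1 kl.2 + xm P n kl.2 kl.1)

lemma mem_Mm (k l : ℕ) : xm P n k l + xm P n l k ∈ Mm P n :=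
  Submodule.subset_span ⟨(k, l), rfl⟩

lemma g1_eq : u P ^ n + v P ^ n = xm P n 1 0 + xm P n 0 1 := by simp [xm]
lemma g2_eq : u P ^ n * v P ^ n = xm P n 1 1 := by simp [xm]

lemma one_eq_xm : (1 : A P) = xm P n 0 0 := by simp [xm]

def Adj : Subalgebra ℂ (A P) :=
  Algebra.adjoin ℂ ({u P ^ n + v P ^ n, u P ^ n * v P ^ n} : Set (A P))

lemma g1_mem : u P ^ n + v P ^ n ∈ Adj P n :=
  Algebra.subset_adjoin (Set.mem_insert _ _)
lemma g2_mem : u P ^ n * v P ^ n ∈ Adj P n :=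
  Algebra.subset_adjoin (Set.mem_insert_of_mem _ rfl)

lemma s_mem (hPn : P ^ (n * n) = 1) :
    ∀ d : ℕ, xm P n d 0 + xm P n 0 d ∈ Adj P n := by
  have key : ∀ d : ℕ, (xm P n d 0 + xm P n 0 d ∈ Adj P n) ∧
      (xm P n (d + 1) 0 + xm P n 0 (d + 1) ∈ Adj P n) := by
    intro d
    induction d with
    | zero =>
      constructor
      · rw [← one_eq_xm, ← two_smul ℂ (1 : A P)]
        exact (Adj P n).smul_mem (Adj P n).one_mem _
      · rw [← g1_eq]
        exact g1_mem P n
    | succ d ih =>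
      refine ⟨ih.2, ?_⟩
      have hid : (xm P n (d+1) 0 + xm P n 0 (d+1)) * (xm P n 1 0 + xm P n 0 1)
          = (xm P n (d+1+1) 0 + xm P n 0 (d+1+1)) + (xm P n (d+1) 1 + xm P n 1 (d+1)) := by
        rw [add_mul, mul_add, mul_add, xm_mul P n hPn, xm_mul P n hPn,
          xm_mul P n hPn, xm_mul P n hPn]
        simp only [add_zero, zero_add]
        abel
      have hid2 : xm P n 1 1 * (xm P n d 0 + xm P n 0 d)
          = xm P n (d+1) 1 + xm P n 1 (d+1) := by
        rw [mul_add, xm_mul P n hPn, xm_mul P n hPn]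
        simp only [add_zero, zero_add, Nat.add_comm 1 d]
      have h2 : xm P n (d+1+1) 0 + xm P n 0 (d+1+1)
          = (xm P n (d+1) 0 + xm P n 0 (d+1)) * (xm P n 1 0 + xm P n 0 1)
            - xm P n 1 1 * (xm P n d 0 + xm P n 0 d) := by
        rw [hid, hid2]; abel
      rw [h2]
      exact Subalgebra.sub_mem _
        (Subalgebra.mul_mem _ ih.2 (by rw [← g1_eq]; exact g1_mem P n))
        (Subalgebra.mul_mem _ (by rw [← g2_eq]; exact g2_mem P n) ih.1)
  exact fun d => (key d).1

lemma m_mem_adj (hPn : P ^ (n * n) = 1) (k l : ℕ) :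
    xm P n k l + xm P n l k ∈ Adj P n := by
  rcases le_total k l with h | h
  · have hx : xm P n k l + xm P n l k
        = xm P n k k * (xm P n 0 (l - k) + xm P n (l - k) 0) := by
      rw [mul_add, xm_mul P n hPn, xm_mul P n hPn]
      simp only [add_zero, Nat.add_sub_cancel' h]
    rw [hx, ← g2_pow P n hPn]
    exact Subalgebra.mul_mem _ (Subalgebra.pow_mem _ (g2_mem P n) k) (by
      rw [add_comm]; exact s_mem P n hPn (l - k))
  · have hx : xm P n k l + xm P n l k
        = xm P n l l * (xm P n (k - l) 0 + xm P n 0 (k - l)) := by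
      rw [mul_add, xm_mul P n hPn, xm_mul P n hPn]
      simp only [add_zero, Nat.add_sub_cancel' h]
    rw [hx, ← g2_pow P n hPn]
    exact Subalgebra.mul_mem _ (Subalgebra.pow_mem _ (g2_mem P n) l) (s_mem P n hPn (k - l))

lemma Mm_le_adj (hPn : P ^ (n * n) = 1) :
    (Mm P n : Set (A P)) ⊆ (Adj P n : Set (A P)) := by
  intro f hf
  have hle : Mm P n ≤ Subalgebra.toSubmodule (Adj P n) := by
    refine Submodule.span_le.2 ?_
    rintro - ⟨⟨k, l⟩, rfl⟩
    exact m_mem_adj P n hPn k l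
  exact hle hf

lemma adj_le_Mm (hPn : P ^ (n * n) = 1) :
    (Adj P n : Set (A P)) ⊆ (Mm P n : Set (A P)) := by
  have hone : (1 : A P) ∈ Mm P n := by
    have h := mem_Mm P n 0 0
    rw [← one_eq_xm] at h
    have h1 : (1 : A P) = (2 : ℂ)⁻¹ • ((1 : A P) + 1) := by
      rw [← two_smul ℂ (1 : A P), smul_smul]
      norm_num
    rw [h1]
    exact (Mm P n).smul_mem _ h
  have hmul : ∀ x y : A P, x ∈ Mm P n → y ∈ Mm P n → x * y ∈ Mm P n := by
    intro x y hx hy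
    induction hx, hy using Submodule.span_induction₂ with
    | mem_mem x y hx hy =>
      obtain ⟨⟨k, l⟩, rfl⟩ := hx
      obtain ⟨⟨c, d⟩, rfl⟩ := hy
      have hexp : (xm P n k l + xm P n l k) * (xm P n c d + xm P n d c)
          = (xm P n (k + c) (l + d) + xm P n (l + d) (k + c))
            + (xm P n (k + d) (l + c) + xm P n (l + c) (k + d)) := by
        rw [add_mul, mul_add, mul_add, xm_mul P n hPn, xm_mul P n hPn,
          xm_mul P n hPn, xm_mul P n hPn]
        abel
      rw [hexp]
      exact (Mm P n).add_mem (mem_Mm P n _ _) (mem_Mm P n _ _)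
    | zero_left y hy => rw [zero_mul]; exact (Mm P n).zero_mem
    | zero_right x hx => rw [mul_zero]; exact (Mm P n).zero_mem
    | add_left x y z hx hy hz h1 h2 => rw [add_mul]; exact (Mm P n).add_mem h1 h2
    | add_right x y z hx hy hz h1 h2 => rw [mul_add]; exact (Mm P n).add_mem h1 h2
    | smul_left r x y hx hy h => rw [smul_mul_assoc]; exact (Mm P n).smul_mem _ h
    | smul_right r x y hx hy h => rw [mul_smul_comm]; exact (Mm P n).smul_mem _ h
  have hle : Adj P n ≤ ((Mm P n).toSubalgebra hone hmul) := by
    apply Algebra.adjoin_le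
    intro g hg
    rcases hg with h | h
    · subst h
      rw [g1_eq]
      exact mem_Mm P n 1 0
    · rw [Set.mem_singleton_iff] at h
      subst h
      have h := mem_Mm P n 1 1
      rw [← g2_eq] at h
      have h2 : u P ^ n * v P ^ n
          = (2 : ℂ)⁻¹ • (u P ^ n * v P ^ n + u P ^ n * v P ^ n) := by
        rw [← two_smul ℂ, smul_smul]; norm_num
      rw [h2]
      exact (Mm P n).smul_mem _ h
  exact hle

end Mods

lemma ev_sum_apply (c : W) (g : ℕ × ℕ → ℂ) (x : ℕ × ℕ) :
    ev P (c.sum fun ab z => (z * g ab) • (u P ^ ab.1 * v P ^ ab.2)) x = c x * g x := by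
  rw [map_finsuppSum]
  simp only [map_smul, ev_monom, Finsupp.smul_single, smul_eq_mul, mul_one]
  rw [Finsupp.sum_apply, Finsupp.sum, Finset.sum_eq_single x]
  · simp [Finsupp.single_apply]
  · intro b hb hne
    simp [Finsupp.single_apply, hne]
  · intro hx
    simp [Finsupp.notMem_support_iff.mp hx]

lemma ev_sum_swap_apply (c : W) (g : ℕ × ℕ → ℂ) (x : ℕ × ℕ) :
    ev P (c.sum fun ab z => (z * g ab) • (u P ^ ab.2 * v P ^ ab.1)) x
      = c (x.2, x.1) * g (x.2, x.1) := by
  rw [map_finsuppSum]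
  simp only [map_smul, ev_monom, Finsupp.smul_single, smul_eq_mul, mul_one]
  rw [Finsupp.sum_apply, Finsupp.sum, Finset.sum_eq_single (x.2, x.1)]
  · simp [Finsupp.single_apply]
  · intro b hb hne
    have : (b.2, b.1) ≠ x := by
      intro hcontra
      apply hne
      ext
      · exact congrArg Prod.snd hcontra
      · exact congrArg Prod.fst hcontra
    simp [Finsupp.single_apply, this]
  · intro hx
    simp [Finsupp.notMem_support_iff.mp hx]

end Stmt11

lemma nt_choose_dvd {n : ℕ} (hodd : Odd n) {a : ℕ} (ha : n ∣ a) : n ∣ a.choose 2 := by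
  have h2 : 2 * a.choose 2 = a * (a - 1) := by
    rw [Nat.choose_two_right, Nat.mul_div_cancel']
    rcases Nat.even_or_odd a with h | h
    · exact Dvd.dvd.mul_right h.two_dvd _
    · rcases a with _ | a
      · simp
      · have : Even a := Nat.Odd.sub_odd h odd_one
        exact Dvd.dvd.mul_left this.two_dvd _
  have hcop : Nat.Coprime n 2 := by
    exact Nat.coprime_two_right.2 hodd
  have hd : n ∣ 2 * a.choose 2 := by
    rw [h2]
    exact Dvd.dvd.mul_right ha _
  exact (Nat.Coprime.dvd_of_dvd_mul_left hcop hd)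

lemma nt_key {n : ℕ} (hodd : Odd n) {i j a b : ℤ}
    (hcop : Int.gcd (i ^ 2 - j ^ 2) (n : ℤ) = 1)
    (h1 : (n : ℤ) ∣ a * i + b * j) (h2 : (n : ℤ) ∣ a * j + b * i) :
    (n : ℤ) ∣ a ∧ (n : ℤ) ∣ b := by
  have hco : IsCoprime ((i + j) * (i - j)) (n : ℤ) := by
    rw [Int.isCoprime_iff_gcd_eq_one]
    rw [show (i + j) * (i - j) = i ^ 2 - j ^ 2 by ring]
    exact hcop
  have hc1 : IsCoprime ((n : ℤ)) (i + j) := (hco.of_mul_left_left).symm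
  have hc2 : IsCoprime ((n : ℤ)) (i - j) := (hco.of_mul_left_right).symm
  have d1 : (n : ℤ) ∣ (i + j) * (a + b) := by
    have := dvd_add h1 h2
    rwa [show a * i + b * j + (a * j + b * i) = (i + j) * (a + b) by ring] at this
  have d2 : (n : ℤ) ∣ (i - j) * (a - b) := by
    have := dvd_sub h1 h2
    rwa [show a * i + b * j - (a * j + b * i) = (i - j) * (a - b) by ring] at this
  have e1 : (n : ℤ) ∣ a + b := hc1.dvd_of_dvd_mul_left d1
  have e2 : (n : ℤ) ∣ a - b := hc2.dvd_of_dvd_mul_left d2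
  have hcop2 : IsCoprime ((n : ℤ)) 2 := by
    rw [Int.isCoprime_iff_gcd_eq_one]
    have h := Nat.coprime_two_right.2 hodd
    simpa [Int.gcd] using h
  have ha : (n : ℤ) ∣ 2 * a := by
    have := dvd_add e1 e2
    rwa [show a + b + (a - b) = 2 * a by ring] at this
  have hna : (n : ℤ) ∣ a := hcop2.dvd_of_dvd_mul_left ha
  refine ⟨hna, ?_⟩
  have := dvd_sub e1 hna
  rwa [show a + b - a = b by ring] at this

open Stmt11 in
theorem stmt_11 (n : ℕ) (hn : 3 ≤ n) (hodd : Odd n) (q p : ℂ)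
    (hq : q = Complex.exp (2 * Real.pi * Complex.I / n))
    (hp : p = Complex.exp ((n + 1) * Real.pi * Complex.I / n))
    (i j : ℕ) (hi : i ≤ n - 1) (hj : j ≤ n - 1)
    (hcop : Int.gcd ((i : ℤ) ^ 2 - (j : ℤ) ^ 2) (n : ℤ) = 1)
    (P : ℂ) (hP : P = p ^ ((i : ℤ) ^ 2 - (j : ℤ) ^ 2))
    (φx φy : A P →ₐ[ℂ] A P)
    (hφxu : φx (u P) = q ^ i • u P) (hφxv : φx (v P) = q ^ j • v P)
    (hφyu : φy (u P) = q ^ j • u P) (hφyv : φy (v P) = q ^ i • v P)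
    (ζ : A P →ₗ[ℂ] A P)
    (hζ : ∀ a b : ℕ,
      ζ (u P ^ a * v P ^ b) =
        (q ^ ((a + a.choose 2 + b.choose 2) * i * j + a * b * j ^ 2) *
          p ^ (((a * b : ℕ) : ℤ) * ((i : ℤ) ^ 2 - (j : ℤ) ^ 2))) •
          (u P ^ b * v P ^ a)) :
    {f : A P | φx f = f ∧ φy f = f ∧ ζ f = f} =
      (Algebra.adjoin ℂ ({u P ^ n + v P ^ n, u P ^ n * v P ^ n} : Set (A P)) :
        Set (A P)) := by
  have hn0 : n ≠ 0 := by omega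
  have hprim : IsPrimitiveRoot q n := by
    rw [hq]; exact Complex.isPrimitiveRoot_exp n hn0
  have hq1 : ∀ m : ℕ, n ∣ m → q ^ m = 1 := fun m hm => (hprim.pow_eq_one_iff_dvd m).2 hm
  have hqdvd : ∀ m : ℕ, q ^ m = 1 → n ∣ m := fun m hm => (hprim.pow_eq_one_iff_dvd m).1 hm
  have hp0 : p ≠ 0 := by rw [hp]; exact Complex.exp_ne_zero _
  have hpnn : p ^ (n * n) = 1 := by
    rw [hp, ← Complex.exp_nat_mul]
    obtain ⟨k, hk⟩ := Nat.even_mul_succ_self n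
    have hkc : ((n * n : ℕ) : ℂ) * ((↑n + 1) * ↑Real.pi * Complex.I / ↑n)
        = ((k : ℤ) : ℂ) * (2 * ↑Real.pi * Complex.I) := by
      have hnC : (n : ℂ) ≠ 0 := Nat.cast_ne_zero.2 hn0
      have hnat : (n * (n + 1) : ℕ) = 2 * k := by omega
      have hcast : ((n : ℂ)) * ((n : ℂ) + 1) = 2 * (k : ℂ) := by
        have := congrArg (fun m : ℕ => (m : ℂ)) hnat
        push_cast at this
        linear_combination this
      field_simp
      push_cast
      linear_combination (n : ℂ) * hcast
    rw [hkc]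
    exact Complex.exp_int_mul_two_pi_mul_I k
  have hPnn : P ^ (n * n) = 1 := by
    rw [hP, ← zpow_natCast (p ^ ((i : ℤ) ^ 2 - (j : ℤ) ^ 2)) (n * n), ← zpow_mul,
      mul_comm ((i : ℤ) ^ 2 - (j : ℤ) ^ 2) (((n * n : ℕ) : ℤ)), zpow_mul, zpow_natCast,
      hpnn, one_zpow]
  -- action of φx, φy on monomials
  have hux : ∀ a b : ℕ, φx (u P ^ a * v P ^ b) = q ^ (a * i + b * j) • (u P ^ a * v P ^ b) := by
    intro a b
    rw [map_mul, map_pow, map_pow, hφxu, hφxv, smul_pow, smul_pow, smul_mul_assoc,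
      mul_smul_comm, smul_smul, ← pow_mul, ← pow_mul, ← pow_add]
    rw [show i * a + j * b = a * i + b * j by ring]
  have huy : ∀ a b : ℕ, φy (u P ^ a * v P ^ b) = q ^ (a * j + b * i) • (u P ^ a * v P ^ b) := by
    intro a b
    rw [map_mul, map_pow, map_pow, hφyu, hφyv, smul_pow, smul_pow, smul_mul_assoc,
      mul_smul_comm, smul_smul, ← pow_mul, ← pow_mul, ← pow_add]
    rw [show j * a + i * b = a * j + b * i by ring]
  -- the ζ-scalar is 1 on monomials with exponents divisible by n
  have hCz : ∀ a b : ℕ, n ∣ a → n ∣ b →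
      (q ^ ((a + a.choose 2 + b.choose 2) * i * j + a * b * j ^ 2) *
        p ^ (((a * b : ℕ) : ℤ) * ((i : ℤ) ^ 2 - (j : ℤ) ^ 2))) = 1 := by
    intro a b ha hb
    have hqpart : q ^ ((a + a.choose 2 + b.choose 2) * i * j + a * b * j ^ 2) = 1 := by
      refine hq1 _ (dvd_add ?_ ?_)
      · exact Dvd.dvd.mul_right (Dvd.dvd.mul_right
          (dvd_add (dvd_add ha (nt_choose_dvd hodd ha)) (nt_choose_dvd hodd hb)) i) j
      · exact Dvd.dvd.mul_right (Dvd.dvd.mul_right ha b) (j ^ 2)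
    have hppart : p ^ (((a * b : ℕ) : ℤ) * ((i : ℤ) ^ 2 - (j : ℤ) ^ 2)) = 1 := by
      obtain ⟨a', rfl⟩ := ha
      obtain ⟨b', rfl⟩ := hb
      rw [show (((n * a' * (n * b') : ℕ) : ℤ) * ((i : ℤ) ^ 2 - (j : ℤ) ^ 2))
          = ((n * n : ℕ) : ℤ) * ((a' * b' : ℤ) * ((i : ℤ) ^ 2 - (j : ℤ) ^ 2)) by push_cast; ring]
      rw [zpow_mul, zpow_natCast, hpnn, one_zpow]
    rw [hqpart, hppart, one_mul]
  -- action of ζ on such monomials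
  have hzm : ∀ a b : ℕ, n ∣ a → n ∣ b → ζ (u P ^ a * v P ^ b) = u P ^ b * v P ^ a := by
    intro a b ha hb
    rw [hζ, hCz a b ha hb, one_smul]
  ext f
  simp only [Set.mem_setOf_eq, SetLike.mem_coe]
  constructor
  · rintro ⟨h1, h2, h3⟩
    apply Mm_le_adj P n hPnn
    show f ∈ Mm P n
    obtain ⟨c, hc⟩ := exists_repr P f
    have hevf : ev P f = c := by rw [← hc]; exact ev_repr P c
    have hφxf : φx f = c.sum fun ab z =>
        (z * q ^ (ab.1 * i + ab.2 * j)) • (u P ^ ab.1 * v P ^ ab.2) := by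
      conv_lhs => rw [← hc]
      rw [map_finsuppSum]
      apply Finsupp.sum_congr
      intro ab _
      rw [map_smul, hux, smul_smul]
    have hφyf : φy f = c.sum fun ab z =>
        (z * q ^ (ab.1 * j + ab.2 * i)) • (u P ^ ab.1 * v P ^ ab.2) := by
      conv_lhs => rw [← hc]
      rw [map_finsuppSum]
      apply Finsupp.sum_congr
      intro ab _
      rw [map_smul, huy, smul_smul]
    have hxcoef : ∀ x : ℕ × ℕ, c x = c x * q ^ (x.1 * i + x.2 * j) := by
      intro x
      have hL := ev_sum_apply P c (fun ab => q ^ (ab.1 * i + ab.2 * j)) x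
      rw [← hφxf, h1, hevf] at hL
      exact hL
    have hycoef : ∀ x : ℕ × ℕ, c x = c x * q ^ (x.1 * j + x.2 * i) := by
      intro x
      have hL := ev_sum_apply P c (fun ab => q ^ (ab.1 * j + ab.2 * i)) x
      rw [← hφyf, h2, hevf] at hL
      exact hL
    have hsupp : ∀ x : ℕ × ℕ, c x ≠ 0 → n ∣ x.1 ∧ n ∣ x.2 := by
      intro x hx
      have e1 : q ^ (x.1 * i + x.2 * j) = 1 :=
        mul_left_cancel₀ hx (by rw [mul_one, ← hxcoef x])
      have e2 : q ^ (x.1 * j + x.2 * i) = 1 :=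
        mul_left_cancel₀ hx (by rw [mul_one, ← hycoef x])
      have d1 : (n : ℤ) ∣ (x.1 : ℤ) * (i : ℤ) + (x.2 : ℤ) * (j : ℤ) := by
        have := hqdvd _ e1
        exact_mod_cast Int.natCast_dvd_natCast.2 this
      have d2 : (n : ℤ) ∣ (x.1 : ℤ) * (j : ℤ) + (x.2 : ℤ) * (i : ℤ) := by
        have := hqdvd _ e2
        exact_mod_cast Int.natCast_dvd_natCast.2 this
      obtain ⟨ha, hb⟩ := nt_key hodd hcop d1 d2
      exact ⟨Int.natCast_dvd_natCast.1 ha, Int.natCast_dvd_natCast.1 hb⟩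
    have hzf : ζ f = c.sum fun ab z => z • (u P ^ ab.2 * v P ^ ab.1) := by
      conv_lhs => rw [← hc]
      rw [map_finsuppSum]
      apply Finsupp.sum_congr
      intro ab hab
      obtain ⟨hd1, hd2⟩ := hsupp ab (Finsupp.mem_support_iff.mp hab)
      rw [map_smul, hzm ab.1 ab.2 hd1 hd2]
    have hf2 : f = (2 : ℂ)⁻¹ • (f + ζ f) := by
      rw [h3, ← two_smul ℂ f, smul_smul]
      norm_num
    rw [hf2]
    refine (Mm P n).smul_mem _ ?_
    rw [hzf]
    rw [← hc]
    rw [← Finsupp.sum_add, Finsupp.sum]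
    refine Submodule.sum_mem _ ?_
    intro ab hab
    obtain ⟨hd1, hd2⟩ := hsupp ab (Finsupp.mem_support_iff.mp hab)
    obtain ⟨a', ha'⟩ := hd1
    obtain ⟨b', hb'⟩ := hd2
    rw [← smul_add, ha', hb', mul_comm n a', mul_comm n b']
    have : u P ^ (a' * n) * v P ^ (b' * n) + u P ^ (b' * n) * v P ^ (a' * n)
        = xm P n a' b' + xm P n b' a' := by simp only [xm]
    rw [this]
    exact (Mm P n).smul_mem _ (mem_Mm P n a' b')
  · intro hf
    have hfM : f ∈ Mm P n := adj_le_Mm P n hPnn hf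
    have key : ∀ g ∈ Mm P n, φx g = g ∧ φy g = g ∧ ζ g = g := by
      intro g hg
      induction hg using Submodule.span_induction with
      | mem x hx =>
        obtain ⟨⟨k, l⟩, rfl⟩ := hx
        have hdk : n ∣ k * n := Dvd.intro_left k rfl
        have hdl : n ∣ l * n := Dvd.intro_left l rfl
        have hx1 : φx (xm P n k l) = xm P n k l := by
          simp only [xm]
          rw [hux, hq1 _ (dvd_add (Dvd.dvd.mul_right hdk i) (Dvd.dvd.mul_right hdl j)),
            one_smul]
        have hx2 : φx (xm P n l k) = xm P n l k := by
          simp only [xm]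
          rw [hux, hq1 _ (dvd_add (Dvd.dvd.mul_right hdl i) (Dvd.dvd.mul_right hdk j)),
            one_smul]
        have hy1 : φy (xm P n k l) = xm P n k l := by
          simp only [xm]
          rw [huy, hq1 _ (dvd_add (Dvd.dvd.mul_right hdk j) (Dvd.dvd.mul_right hdl i)),
            one_smul]
        have hy2 : φy (xm P n l k) = xm P n l k := by
          simp only [xm]
          rw [huy, hq1 _ (dvd_add (Dvd.dvd.mul_right hdl j) (Dvd.dvd.mul_right hdk i)),
            one_smul]
        have hz1 : ζ (xm P n k l) = xm P n l k := by
          simp only [xm]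
          rw [hzm _ _ hdk hdl]
        have hz2 : ζ (xm P n l k) = xm P n k l := by
          simp only [xm]
          rw [hzm _ _ hdl hdk]
        refine ⟨?_, ?_, ?_⟩
        · rw [map_add, hx1, hx2]
        · rw [map_add, hy1, hy2]
        · rw [map_add, hz1, hz2, add_comm]
      | zero => exact ⟨map_zero _, map_zero _, map_zero _⟩
      | add x y hx hy ihx ihy =>
        exact ⟨by rw [map_add, ihx.1, ihy.1], by rw [map_add, ihx.2.1, ihy.2.1],
          by rw [map_add, ihx.2.2, ihy.2.2]⟩
      | smul a x hx ihx =>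
        exact ⟨by rw [map_smul, ihx.1], by rw [map_smul, ihx.2.1],
          by rw [map_smul, ihx.2.2]⟩
    exact key f hfM

end
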